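/- For every odd integer k ≥ 3, the graph R_k satisfies c_o(R_k) = 2^k and c_e(R_k) = k. -/

import Mathlib

open SimpleGraph Filter

/-- A subgraph is a cycle: nonempty vertex set, connected, and every vertex of the
subgraph has degree exactly 2 in the subgraph. -/
def SimpleGraph.Subgraph.IsCycleSub {V : Type*} {G : SimpleGraph V} (H : G.Subgraph) : Prop :=
  H.verts.Nonempty ∧ H.coe.Connected ∧ ∀ v ∈ H.verts, (H.neighborSet v).ncard = 2

/-- The number of odd cycles of `G`. -/
noncomputable def cOdd {V : Type*} (G : SimpleGraph V) : ℕ :=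
  {H : G.Subgraph | H.IsCycleSub ∧ Odd H.verts.ncard}.ncard

/-- The number of even cycles of `G`. -/
noncomputable def cEven {V : Type*} (G : SimpleGraph V) : ℕ :=
  {H : G.Subgraph | H.IsCycleSub ∧ Even H.verts.ncard}.ncard

/-- The number of odd cycles of `G` passing through the edge `xy`. -/
noncomputable def cOddE {V : Type*} (G : SimpleGraph V) (x y : V) : ℕ :=
  {H : G.Subgraph | H.IsCycleSub ∧ Odd H.verts.ncard ∧ H.Adj x y}.ncard

/-- The number of even cycles of `G` passing through the edge `xy`. -/
noncomputable def cEvenE {V : Type*} (G : SimpleGraph V) (x y : V) : ℕ :=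
  {H : G.Subgraph | H.IsCycleSub ∧ Even H.verts.ncard ∧ H.Adj x y}.ncard

/-- The graph `R_k`: a `k`-cycle `v_0 … v_(k-1)` where each edge `v_i v_(i+1)` lies on an
attached 4-cycle `v_i a_i b_i v_(i+1)`.  Vertex `(i, 0)` is `v_i`, `(i, 1)` is `a_i`,
`(i, 2)` is `b_i`. -/
def RGraph (k : ℕ) : SimpleGraph (ZMod k × Fin 3) :=
  SimpleGraph.fromRel (fun p q =>
    (p.2 = 0 ∧ q.2 = 0 ∧ q.1 = p.1 + 1) ∨
    (p.2 = 0 ∧ q.2 = 1 ∧ q.1 = p.1) ∨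
    (p.2 = 1 ∧ q.2 = 2 ∧ q.1 = p.1) ∨
    (p.2 = 2 ∧ q.2 = 0 ∧ q.1 = p.1 + 1))

namespace RK
variable {k : ℕ}
abbrev V3 (k : ℕ) := ZMod k × Fin 3

lemma adj1 (i : ZMod k) (q : V3 k) :
    (RGraph k).Adj (i,1) q ↔ q = (i,0) ∨ q = (i,2) := by
  obtain ⟨j,t⟩ := q
  rw [RGraph, SimpleGraph.fromRel_adj]
  fin_cases t <;> simp [Prod.mk.injEq, eq_comm]

lemma adj2 (i : ZMod k) (q : V3 k) :
    (RGraph k).Adj (i,2) q ↔ q = (i,1) ∨ q = (i+1,0) := by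
  obtain ⟨j,t⟩ := q
  rw [RGraph, SimpleGraph.fromRel_adj]
  fin_cases t <;> simp [Prod.mk.injEq, eq_comm]

lemma one_ne (hk : 3 ≤ k) : (1 : ZMod k) ≠ 0 := by
  haveI : NeZero k := ⟨by omega⟩
  intro h
  have : k ∣ 1 := by exact_mod_cast (ZMod.natCast_eq_zero_iff 1 k).mp (by exact_mod_cast h)
  have := Nat.le_of_dvd (by norm_num) this
  omega

lemma two_ne (hk : 3 ≤ k) : (2 : ZMod k) ≠ 0 := by
  haveI : NeZero k := ⟨by omega⟩
  intro h
  have : k ∣ 2 := by exact_mod_cast (ZMod.natCast_eq_zero_iff 2 k).mp (by exact_mod_cast h)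
  have := Nat.le_of_dvd (by norm_num) this
  omega

lemma add_one_ne (hk : 3 ≤ k) (i : ZMod k) : i + 1 ≠ i := by
  intro h; exact one_ne hk (by linear_combination h)

lemma sub_one_ne (hk : 3 ≤ k) (i : ZMod k) : i - 1 ≠ i := by
  intro h; exact one_ne hk (by linear_combination i - h)

lemma add_ne_sub (hk : 3 ≤ k) (i : ZMod k) : i + 1 ≠ i - 1 := by
  intro h; exact two_ne hk (by linear_combination h)

lemma sub_add_one (i : ZMod k) : i - 1 + 1 = i := by ring

lemma adj0 (hk : 3 ≤ k) (i : ZMod k) (q : V3 k) :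
    (RGraph k).Adj (i,0) q ↔ q = (i+1,0) ∨ q = (i,1) ∨ q = (i-1,0) ∨ q = (i-1,2) := by
  obtain ⟨j,t⟩ := q
  rw [RGraph, SimpleGraph.fromRel_adj]
  fin_cases t <;>
    simp [Prod.mk.injEq, eq_comm, eq_sub_iff_add_eq]
  rintro (h | h) rfl
  · exact add_one_ne hk i h.symm
  · exact add_one_ne hk i h.symm

/-- one directed half of the 4-cycle at slot `i` -/
def fcAdj (i : ZMod k) (p q : V3 k) : Prop :=
  (p = (i,0) ∧ q = (i,1)) ∨ (p = (i,1) ∧ q = (i,2)) ∨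
  (p = (i,2) ∧ q = (i+1,0)) ∨ (p = (i,0) ∧ q = (i+1,0))

def fourCycle (hk : 3 ≤ k) (i : ZMod k) : (RGraph k).Subgraph where
  verts := {(i,0),(i,1),(i,2),(i+1,0)}
  Adj p q := fcAdj i p q ∨ fcAdj i q p
  adj_sub := by
    rintro p q ((⟨rfl,rfl⟩|⟨rfl,rfl⟩|⟨rfl,rfl⟩|⟨rfl,rfl⟩)|(⟨rfl,rfl⟩|⟨rfl,rfl⟩|⟨rfl,rfl⟩|⟨rfl,rfl⟩))
    · rw [adj0 hk]; tauto
    · rw [adj1]; tauto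
    · rw [adj2]; tauto
    · rw [adj0 hk]; tauto
    · exact ((RGraph k).adj_symm (by rw [adj0 hk]; tauto))
    · exact ((RGraph k).adj_symm (by rw [adj1]; tauto))
    · exact ((RGraph k).adj_symm (by rw [adj2]; tauto))
    · exact ((RGraph k).adj_symm (by rw [adj0 hk]; tauto))
  edge_vert := by
    rintro p q ((⟨rfl,-⟩|⟨rfl,-⟩|⟨rfl,-⟩|⟨rfl,-⟩)|(⟨-,rfl⟩|⟨-,rfl⟩|⟨-,rfl⟩|⟨-,rfl⟩)) <;> simp [Set.mem_insert_iff]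
  symm := by constructor; rintro p q (h | h); exacts [Or.inr h, Or.inl h]

/-- one directed half of the ring cycle determined by `f` -/
def rcHalf (f : ZMod k → Bool) (p q : V3 k) : Prop :=
  (¬ f p.1 ∧ p.2 = 0 ∧ q.2 = 0 ∧ q.1 = p.1 + 1) ∨
  (f p.1 ∧ p.2 = 0 ∧ q.2 = 1 ∧ q.1 = p.1) ∨
  (f p.1 ∧ p.2 = 1 ∧ q.2 = 2 ∧ q.1 = p.1) ∨
  (f p.1 ∧ p.2 = 2 ∧ q.2 = 0 ∧ q.1 = p.1 + 1)

def ringCycle (hk : 3 ≤ k) (f : ZMod k → Bool) : (RGraph k).Subgraph where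
  verts := {p | p.2 = 0 ∨ f p.1}
  Adj p q := rcHalf f p q ∨ rcHalf f q p
  adj_sub := by
    have base : ∀ p q : V3 k, rcHalf f p q → (RGraph k).Adj p q := by
      rintro ⟨a,s⟩ ⟨b,t⟩ (⟨-,h2,h3,h4⟩|⟨-,h2,h3,h4⟩|⟨-,h2,h3,h4⟩|⟨-,h2,h3,h4⟩) <;>
        dsimp only at h2 h3 h4 <;> subst h2 <;> subst h3 <;> subst h4
      · rw [adj0 hk]; tauto
      · rw [adj0 hk]; tauto
      · rw [adj1]; tauto
      · rw [adj2]; tauto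
    rintro p q (h | h)
    · exact base p q h
    · exact ((RGraph k).adj_symm (base q p h))
  edge_vert := by
    rintro ⟨a,s⟩ ⟨b,t⟩ ((⟨-,h2,-⟩|⟨h1,h2,-⟩|⟨h1,h2,-⟩|⟨h1,h2,-⟩)|(⟨-,-,h3,-⟩|⟨h1,-,h3,h4⟩|⟨h1,-,h3,h4⟩|⟨h1,-,h3,-⟩)) <;>
      dsimp only at * <;> simp_all [Set.mem_setOf_eq]
  symm := by constructor; rintro p q (h | h); exacts [Or.inr h, Or.inl h]

lemma fc_nb0 (hk : 3 ≤ k) (i : ZMod k) :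
    (fourCycle hk i).neighborSet (i,0) = {(i,1),(i+1,0)} := by
  ext q
  simp only [Subgraph.mem_neighborSet, fourCycle, fcAdj, Prod.mk.injEq, Set.mem_insert_iff,
    Set.mem_singleton_iff]
  constructor
  · rintro ((⟨h,rfl⟩|⟨h,rfl⟩|⟨h,rfl⟩|⟨h,rfl⟩)|(⟨rfl,h⟩|⟨rfl,h⟩|⟨rfl,h⟩|⟨rfl,h⟩)) <;>
      first
      | exact Or.inl rfl
      | exact Or.inr rfl
      | (exfalso; revert h; simp [Prod.mk.injEq, (add_one_ne hk i).symm])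
  · rintro (rfl | rfl) <;> simp [Prod.mk.injEq]

lemma fc_nb1 (hk : 3 ≤ k) (i : ZMod k) :
    (fourCycle hk i).neighborSet (i,1) = {(i,0),(i,2)} := by
  ext q
  simp only [Subgraph.mem_neighborSet, fourCycle, fcAdj, Prod.mk.injEq, Set.mem_insert_iff,
    Set.mem_singleton_iff]
  constructor
  · rintro ((⟨h,rfl⟩|⟨h,rfl⟩|⟨h,rfl⟩|⟨h,rfl⟩)|(⟨rfl,h⟩|⟨rfl,h⟩|⟨rfl,h⟩|⟨rfl,h⟩)) <;>
      first
      | exact Or.inl rfl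
      | exact Or.inr rfl
      | (exfalso; revert h; simp [Prod.mk.injEq, (add_one_ne hk i).symm])
  · rintro (rfl | rfl) <;> simp [Prod.mk.injEq]

lemma fc_nb2 (hk : 3 ≤ k) (i : ZMod k) :
    (fourCycle hk i).neighborSet (i,2) = {(i,1),(i+1,0)} := by
  ext q
  simp only [Subgraph.mem_neighborSet, fourCycle, fcAdj, Prod.mk.injEq, Set.mem_insert_iff,
    Set.mem_singleton_iff]
  constructor
  · rintro ((⟨h,rfl⟩|⟨h,rfl⟩|⟨h,rfl⟩|⟨h,rfl⟩)|(⟨rfl,h⟩|⟨rfl,h⟩|⟨rfl,h⟩|⟨rfl,h⟩)) <;>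
      first
      | exact Or.inl rfl
      | exact Or.inr rfl
      | (exfalso; revert h; simp [Prod.mk.injEq, (add_one_ne hk i).symm])
  · rintro (rfl | rfl) <;> simp [Prod.mk.injEq]

lemma fc_nb3 (hk : 3 ≤ k) (i : ZMod k) :
    (fourCycle hk i).neighborSet (i+1,0) = {(i,2),(i,0)} := by
  ext q
  simp only [Subgraph.mem_neighborSet, fourCycle, fcAdj, Prod.mk.injEq, Set.mem_insert_iff,
    Set.mem_singleton_iff]
  constructor
  · rintro ((⟨h,rfl⟩|⟨h,rfl⟩|⟨h,rfl⟩|⟨h,rfl⟩)|(⟨rfl,h⟩|⟨rfl,h⟩|⟨rfl,h⟩|⟨rfl,h⟩)) <;>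
      first
      | exact Or.inl rfl
      | exact Or.inr rfl
      | (exfalso; revert h; simp [Prod.mk.injEq, add_one_ne hk i])
  · rintro (rfl | rfl) <;> simp [Prod.mk.injEq]

lemma rc_adj_def (hk : 3 ≤ k) (f : ZMod k → Bool) (p q : V3 k) :
    (ringCycle hk f).Adj p q ↔ rcHalf f p q ∨ rcHalf f q p := Iff.rfl

lemma rc_adj1 (hk : 3 ≤ k) (f : ZMod k → Bool) (j : ZMod k) (q : V3 k) :
    (ringCycle hk f).Adj (j,1) q ↔ f j ∧ (q = (j,0) ∨ q = (j,2)) := by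
  obtain ⟨a,t⟩ := q
  rw [rc_adj_def]
  constructor
  · rintro ((⟨h1,h2,h3,h4⟩|⟨h1,h2,h3,h4⟩|⟨h1,h2,h3,h4⟩|⟨h1,h2,h3,h4⟩)|(⟨h1,h2,h3,h4⟩|⟨h1,h2,h3,h4⟩|⟨h1,h2,h3,h4⟩|⟨h1,h2,h3,h4⟩)) <;>
      dsimp only at h1 h2 h3 h4 <;>
      first
        | exact absurd h2 (by decide)
        | exact absurd h3 (by decide)
        | (subst h4; subst h3; exact ⟨h1, Or.inr rfl⟩)
        | (subst h4; subst h2; exact ⟨h1, Or.inl rfl⟩)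
  · simp only [Prod.mk.injEq]
    rintro ⟨hf, (⟨rfl, rfl⟩ | ⟨rfl, rfl⟩)⟩
    · exact Or.inr (Or.inr (Or.inl ⟨hf, rfl, rfl, rfl⟩))
    · exact Or.inl (Or.inr (Or.inr (Or.inl ⟨hf, rfl, rfl, rfl⟩)))

lemma rc_adj2 (hk : 3 ≤ k) (f : ZMod k → Bool) (j : ZMod k) (q : V3 k) :
    (ringCycle hk f).Adj (j,2) q ↔ f j ∧ (q = (j,1) ∨ q = (j+1,0)) := by
  obtain ⟨a,t⟩ := q
  rw [rc_adj_def]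
  constructor
  · rintro ((⟨h1,h2,h3,h4⟩|⟨h1,h2,h3,h4⟩|⟨h1,h2,h3,h4⟩|⟨h1,h2,h3,h4⟩)|(⟨h1,h2,h3,h4⟩|⟨h1,h2,h3,h4⟩|⟨h1,h2,h3,h4⟩|⟨h1,h2,h3,h4⟩)) <;>
      dsimp only at h1 h2 h3 h4 <;>
      first
        | exact absurd h2 (by decide)
        | exact absurd h3 (by decide)
        | (subst h4; subst h3; exact ⟨h1, Or.inr rfl⟩)
        | (subst h4; subst h2; exact ⟨h1, Or.inl rfl⟩)
  · simp only [Prod.mk.injEq]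
    rintro ⟨hf, (⟨rfl, rfl⟩ | ⟨rfl, rfl⟩)⟩
    · exact Or.inr (Or.inr (Or.inr (Or.inl ⟨hf, rfl, rfl, rfl⟩)))
    · exact Or.inl (Or.inr (Or.inr (Or.inr ⟨hf, rfl, rfl, rfl⟩)))

lemma rc_adj0 (hk : 3 ≤ k) (f : ZMod k → Bool) (j : ZMod k) (q : V3 k) :
    (ringCycle hk f).Adj (j,0) q ↔
      (¬ f j ∧ q = (j+1,0)) ∨ (f j ∧ q = (j,1)) ∨
      (¬ f (j-1) ∧ q = (j-1,0)) ∨ (f (j-1) ∧ q = (j-1,2)) := by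
  obtain ⟨a,t⟩ := q
  rw [rc_adj_def]
  constructor
  · rintro ((⟨h1,h2,h3,h4⟩|⟨h1,h2,h3,h4⟩|⟨h1,h2,h3,h4⟩|⟨h1,h2,h3,h4⟩)|(⟨h1,h2,h3,h4⟩|⟨h1,h2,h3,h4⟩|⟨h1,h2,h3,h4⟩|⟨h1,h2,h3,h4⟩)) <;>
      dsimp only at h1 h2 h3 h4
    · subst h4; subst h3; exact Or.inl ⟨h1, rfl⟩
    · subst h4; subst h3; exact Or.inr (Or.inl ⟨h1, rfl⟩)
    · exact absurd h2 (by decide)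
    · exact absurd h2 (by decide)
    · have ha : a = j - 1 := by rw [eq_sub_iff_add_eq]; exact h4.symm
      subst ha; subst h2
      exact Or.inr (Or.inr (Or.inl ⟨h1, rfl⟩))
    · exact absurd h3 (by decide)
    · exact absurd h3 (by decide)
    · have ha : a = j - 1 := by rw [eq_sub_iff_add_eq]; exact h4.symm
      subst ha; subst h2
      exact Or.inr (Or.inr (Or.inr ⟨h1, rfl⟩))
  · simp only [Prod.mk.injEq]
    rintro (⟨hf, rfl, rfl⟩ | ⟨hf, rfl, rfl⟩ | ⟨hf, rfl, rfl⟩ | ⟨hf, rfl, rfl⟩)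
    · exact Or.inl (Or.inl ⟨hf, rfl, rfl, rfl⟩)
    · exact Or.inl (Or.inr (Or.inl ⟨hf, rfl, rfl, rfl⟩))
    · exact Or.inr (Or.inl ⟨hf, rfl, rfl, by dsimp only; ring⟩)
    · exact Or.inr (Or.inr (Or.inr (Or.inr ⟨hf, rfl, rfl, by dsimp only; ring⟩)))

lemma rc_mem_verts (hk : 3 ≤ k) (f : ZMod k → Bool) (p : V3 k) :
    p ∈ (ringCycle hk f).verts ↔ p.2 = 0 ∨ f p.1 := Iff.rfl

lemma rc_nb1 (hk : 3 ≤ k) {f : ZMod k → Bool} {j : ZMod k} (hf : f j = true) :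
    (ringCycle hk f).neighborSet (j,1) = {(j,0),(j,2)} := by
  ext q; simp [Subgraph.mem_neighborSet, rc_adj1 hk, hf]

lemma rc_nb2 (hk : 3 ≤ k) {f : ZMod k → Bool} {j : ZMod k} (hf : f j = true) :
    (ringCycle hk f).neighborSet (j,2) = {(j,1),(j+1,0)} := by
  ext q; simp [Subgraph.mem_neighborSet, rc_adj2 hk, hf]

lemma rc_nb0 (hk : 3 ≤ k) (f : ZMod k → Bool) (j : ZMod k) :
    (ringCycle hk f).neighborSet (j,0) =
      {(if f j then ((j,1) : V3 k) else (j+1,0)), (if f (j-1) then ((j-1,2) : V3 k) else (j-1,0))} := by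
  ext q
  by_cases h1 : f j <;> by_cases h2 : f (j-1) <;>
    simp [Subgraph.mem_neighborSet, rc_adj0 hk, h1, h2]

lemma fc_verts_ncard (hk : 3 ≤ k) (i : ZMod k) : (fourCycle hk i).verts.ncard = 4 := by
  haveI : NeZero k := ⟨by omega⟩
  show ({(i,0),(i,1),(i,2),(i+1,0)} : Set (V3 k)).ncard = 4
  rw [Set.ncard_insert_of_notMem (by simp [Prod.ext_iff, (add_one_ne hk i).symm]),
    Set.ncard_insert_of_notMem (by simp [Prod.ext_iff]),
    Set.ncard_insert_of_notMem (by simp [Prod.ext_iff]), Set.ncard_singleton]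

lemma rc_verts_decomp (hk : 3 ≤ k) (f : ZMod k → Bool) :
    (ringCycle hk f).verts =
      (fun i => ((i,0) : V3 k)) '' Set.univ ∪
      ((fun i => ((i,1) : V3 k)) '' {i | f i} ∪ (fun i => ((i,2) : V3 k)) '' {i | f i}) := by
  ext ⟨a,t⟩
  rw [rc_mem_verts]
  fin_cases t <;> simp [Prod.ext_iff] <;> aesop

lemma odd_rc_verts_ncard (hk : 3 ≤ k) (hkodd : Odd k) (f : ZMod k → Bool) :
    Odd (ringCycle hk f).verts.ncard := by
  haveI : NeZero k := ⟨by omega⟩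
  rw [rc_verts_decomp hk f]
  have inj : ∀ c : Fin 3, Function.Injective (fun i : ZMod k => ((i,c) : V3 k)) := by
    intro c a b h; exact (Prod.ext_iff.mp h).1
  rw [Set.ncard_union_eq (by
        rw [Set.disjoint_left]; rintro p ⟨x,-,rfl⟩ (⟨y,-,h⟩|⟨y,-,h⟩) <;> simp at h)
      (Set.toFinite _) (Set.toFinite _),
    Set.ncard_union_eq (by
        rw [Set.disjoint_left]; rintro p ⟨x,-,rfl⟩ ⟨y,-,h⟩; simp at h)
      (Set.toFinite _) (Set.toFinite _),
    Set.ncard_image_of_injective _ (inj 0), Set.ncard_image_of_injective _ (inj 1),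
    Set.ncard_image_of_injective _ (inj 2), Set.ncard_univ, Nat.card_zmod]
  obtain ⟨m, hm⟩ := hkodd
  exact ⟨m + {i | f i}.ncard, by omega⟩

lemma ne12 (a b : ZMod k) : ((a,1) : V3 k) ≠ (b,2) := by simp [Prod.ext_iff]
lemma ne10 (a b : ZMod k) : ((a,1) : V3 k) ≠ (b,0) := by simp [Prod.ext_iff]
lemma ne20 (a b : ZMod k) : ((a,2) : V3 k) ≠ (b,0) := by simp [Prod.ext_iff]
lemma ne02 (a b : ZMod k) : ((a,0) : V3 k) ≠ (b,2) := by simp [Prod.ext_iff]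
lemma ne01 (a b : ZMod k) : ((a,0) : V3 k) ≠ (b,1) := by simp [Prod.ext_iff]
lemma ne21 (a b : ZMod k) : ((a,2) : V3 k) ≠ (b,1) := by simp [Prod.ext_iff]

lemma fc_mem_verts (hk : 3 ≤ k) (i : ZMod k) (p : V3 k) :
    p ∈ (fourCycle hk i).verts ↔ p = (i,0) ∨ p = (i,1) ∨ p = (i,2) ∨ p = (i+1,0) := by
  simp [fourCycle, Set.mem_insert_iff]

lemma fin3 (t : Fin 3) : t = 0 ∨ t = 1 ∨ t = 2 := by revert t; decide

lemma fc_isCycle (hk : 3 ≤ k) (i : ZMod k) : (fourCycle hk i).IsCycleSub := by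
  haveI : NeZero k := ⟨by omega⟩
  have cadj : ∀ (u v : V3 k) (hu : u ∈ (fourCycle hk i).verts)
      (hv : v ∈ (fourCycle hk i).verts), (fourCycle hk i).Adj u v →
      (fourCycle hk i).coe.Adj ⟨u,hu⟩ ⟨v,hv⟩ := fun _ _ _ _ h => h
  have h01 : (fourCycle hk i).Adj (i,0) (i,1) := Or.inl (Or.inl ⟨rfl,rfl⟩)
  have h12 : (fourCycle hk i).Adj (i,1) (i,2) := Or.inl (Or.inr (Or.inl ⟨rfl,rfl⟩))
  have h23 : (fourCycle hk i).Adj (i,2) (i+1,0) := Or.inl (Or.inr (Or.inr (Or.inl ⟨rfl,rfl⟩)))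
  have m0 : ((i,0) : V3 k) ∈ (fourCycle hk i).verts := by rw [fc_mem_verts]; tauto
  have m1 : ((i,1) : V3 k) ∈ (fourCycle hk i).verts := by rw [fc_mem_verts]; tauto
  have m2 : ((i,2) : V3 k) ∈ (fourCycle hk i).verts := by rw [fc_mem_verts]; tauto
  have m3 : ((i+1,0) : V3 k) ∈ (fourCycle hk i).verts := by rw [fc_mem_verts]; tauto
  refine ⟨⟨(i,0), m0⟩, ?_, ?_⟩
  · have key : ∀ v : (fourCycle hk i).verts, (fourCycle hk i).coe.Reachable v ⟨(i,0), m0⟩ := by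
      rintro ⟨v, hv⟩
      have hv' := hv
      rw [fc_mem_verts] at hv'
      rcases hv' with rfl | rfl | rfl | rfl
      · exact SimpleGraph.Reachable.refl _
      · exact (cadj _ _ m1 m0 h01.symm).reachable
      · exact ((cadj _ _ m2 m1 h12.symm).reachable).trans ((cadj _ _ m1 m0 h01.symm).reachable)
      · exact ((cadj _ _ m3 m2 h23.symm).reachable).trans
          (((cadj _ _ m2 m1 h12.symm).reachable).trans ((cadj _ _ m1 m0 h01.symm).reachable))
    haveI : Nonempty (fourCycle hk i).verts := ⟨⟨(i,0), m0⟩⟩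
    exact ⟨fun u v => (key u).trans (key v).symm⟩
  · intro v hv
    rw [fc_mem_verts] at hv
    rcases hv with rfl | rfl | rfl | rfl
    · rw [fc_nb0 hk]; exact Set.ncard_pair (by simp [Prod.ext_iff])
    · rw [fc_nb1 hk]; exact Set.ncard_pair (by simp [Prod.ext_iff])
    · rw [fc_nb2 hk]; exact Set.ncard_pair (by simp [Prod.ext_iff])
    · rw [fc_nb3 hk]; exact Set.ncard_pair (by simp [Prod.ext_iff])

lemma rc_isCycle (hk : 3 ≤ k) (f : ZMod k → Bool) : (ringCycle hk f).IsCycleSub := by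
  haveI : NeZero k := ⟨by omega⟩
  have m0 : ∀ j : ZMod k, ((j,0) : V3 k) ∈ (ringCycle hk f).verts := fun j => Or.inl rfl
  have cadj : ∀ (u v : V3 k) (hu : u ∈ (ringCycle hk f).verts)
      (hv : v ∈ (ringCycle hk f).verts), (ringCycle hk f).Adj u v →
      (ringCycle hk f).coe.Adj ⟨u,hu⟩ ⟨v,hv⟩ := fun _ _ _ _ h => h
  refine ⟨⟨(0,0), m0 0⟩, ?_, ?_⟩
  · have step : ∀ j : ZMod k,
        (ringCycle hk f).coe.Reachable ⟨(j,0), m0 j⟩ ⟨(j+1,0), m0 (j+1)⟩ := by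
      intro j
      by_cases hf : f j
      · have a1 : (ringCycle hk f).Adj (j,0) (j,1) :=
          (rc_adj0 hk f j _).mpr (Or.inr (Or.inl ⟨hf, rfl⟩))
        have a2 : (ringCycle hk f).Adj (j,1) (j,2) := (rc_adj1 hk f j _).mpr ⟨hf, Or.inr rfl⟩
        have a3 : (ringCycle hk f).Adj (j,2) (j+1,0) := (rc_adj2 hk f j _).mpr ⟨hf, Or.inr rfl⟩
        have m1 : ((j,1) : V3 k) ∈ (ringCycle hk f).verts := Or.inr hf
        have m2 : ((j,2) : V3 k) ∈ (ringCycle hk f).verts := Or.inr hf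
        exact (((cadj _ _ (m0 j) m1 a1).reachable).trans
          ((cadj _ _ m1 m2 a2).reachable)).trans ((cadj _ _ m2 (m0 _) a3).reachable)
      · exact (cadj _ _ (m0 j) (m0 _) ((rc_adj0 hk f j _).mpr (Or.inl ⟨hf, rfl⟩))).reachable
    have toZero : ∀ n : ℕ,
        (ringCycle hk f).coe.Reachable ⟨(0,0), m0 0⟩ ⟨(((n : ZMod k)),0), m0 _⟩ := by
      intro n
      induction n with
      | zero =>
          have hc : (((0:ℕ) : ZMod k)) = 0 := Nat.cast_zero
          simp only [hc]
          exact SimpleGraph.Reachable.refl _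
      | succ n ih =>
          have hc : (((n+1 : ℕ) : ZMod k)) = ((n : ZMod k)) + 1 := by push_cast; ring
          have := ih.trans (step ((n : ZMod k)))
          simpa [hc] using this
    have toAll : ∀ j : ZMod k, (ringCycle hk f).coe.Reachable ⟨(0,0), m0 0⟩ ⟨(j,0), m0 j⟩ := by
      intro j
      have hva : (((j.val : ℕ)) : ZMod k) = j := ZMod.natCast_rightInverse j
      have := toZero j.val
      simpa [hva] using this
    have key : ∀ v : (ringCycle hk f).verts,
        (ringCycle hk f).coe.Reachable v ⟨(0,0), m0 0⟩ := by
      rintro ⟨⟨a,t⟩, hv⟩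
      rcases fin3 t with rfl | rfl | rfl
      · exact (toAll a).symm
      · have hf : f a = true := by
          rcases hv with h | h
          · simp at h
          · exact h
        exact ((cadj _ _ hv (m0 a) ((rc_adj1 hk f a _).mpr ⟨hf, Or.inl rfl⟩)).reachable).trans
          (toAll a).symm
      · have hf : f a = true := by
          rcases hv with h | h
          · simp at h
          · exact h
        have m1 : ((a,1) : V3 k) ∈ (ringCycle hk f).verts := Or.inr hf
        exact (((cadj _ _ hv m1 ((rc_adj2 hk f a _).mpr ⟨hf, Or.inl rfl⟩)).reachable).trans
          ((cadj _ _ m1 (m0 a) ((rc_adj1 hk f a _).mpr ⟨hf, Or.inl rfl⟩)).reachable)).trans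
          (toAll a).symm
    haveI : Nonempty (ringCycle hk f).verts := ⟨⟨(0,0), m0 0⟩⟩
    exact ⟨fun u v => (key u).trans (key v).symm⟩
  · rintro ⟨a,t⟩ hv
    rcases fin3 t with rfl | rfl | rfl
    · rw [rc_nb0 hk]
      refine Set.ncard_pair ?_
      by_cases h1 : f a <;> by_cases h2 : f (a-1) <;> simp only [h1, h2, if_true, if_false] <;>
        first
          | exact ne12 _ _
          | exact ne10 _ _
          | simp [Prod.ext_iff, add_ne_sub hk a]
    · have hf : f a = true := by
        rcases hv with h | h
        · simp at h
        · exact h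
      rw [rc_nb1 hk hf]; exact Set.ncard_pair (by simp [Prod.ext_iff])
    · have hf : f a = true := by
        rcases hv with h | h
        · simp at h
        · exact h
      rw [rc_nb2 hk hf]; exact Set.ncard_pair (by simp [Prod.ext_iff])

lemma verts_eq_of_closed {W : Type*} {G : SimpleGraph W} (H : G.Subgraph)
    (hc : H.coe.Connected) (S : Set W) (hS : S ⊆ H.verts) (hne : S.Nonempty)
    (hcl : ∀ p ∈ S, ∀ q, H.Adj p q → q ∈ S) : H.verts = S := by
  refine Set.Subset.antisymm ?_ hS
  obtain ⟨s, hs⟩ := hne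
  intro v hv
  obtain ⟨w⟩ := hc.preconnected ⟨s, hS hs⟩ ⟨v, hv⟩
  have main : ∀ (x y : ↑H.verts) (w : H.coe.Walk x y), x.1 ∈ S → y.1 ∈ S := by
    intro x y w
    induction w with
    | nil => exact id
    | @cons a b c h w ih => exact fun hx => ih (hcl _ hx _ h)
  exact main _ _ w hs

lemma subgraph_eq_of_nb {W : Type*} {G : SimpleGraph W} {H K : G.Subgraph}
    (hv : H.verts = K.verts)
    (hn : ∀ p ∈ H.verts, H.neighborSet p = K.neighborSet p) : H = K := by
  refine SimpleGraph.Subgraph.ext hv ?_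
  ext p q
  constructor
  · intro h
    have hp : p ∈ H.verts := H.edge_vert h
    have : q ∈ H.neighborSet p := h
    rw [hn p hp] at this
    exact this
  · intro h
    have hp : p ∈ H.verts := by rw [hv]; exact K.edge_vert h
    have : q ∈ K.neighborSet p := h
    rw [← hn p hp] at this
    exact this

variable {H : (RGraph k).Subgraph}

lemma cyc_nb1 (hk : 3 ≤ k) (hH : H.IsCycleSub) (i : ZMod k) (h : ((i,1) : V3 k) ∈ H.verts) :
    H.neighborSet (i,1) = {(i,0),(i,2)} := by
  haveI : NeZero k := ⟨by omega⟩
  have hsub : H.neighborSet (i,1) ⊆ {(i,0),(i,2)} := by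
    intro q hq
    have h2 := H.adj_sub hq
    rw [adj1] at h2
    simpa using h2
  refine Set.eq_of_subset_of_ncard_le hsub ?_ (Set.toFinite _)
  rw [hH.2.2 _ h, Set.ncard_pair (ne02 i i)]

lemma cyc_nb2 (hk : 3 ≤ k) (hH : H.IsCycleSub) (i : ZMod k) (h : ((i,2) : V3 k) ∈ H.verts) :
    H.neighborSet (i,2) = {(i,1),(i+1,0)} := by
  haveI : NeZero k := ⟨by omega⟩
  have hsub : H.neighborSet (i,2) ⊆ {(i,1),(i+1,0)} := by
    intro q hq
    have h2 := H.adj_sub hq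
    rw [adj2] at h2
    simpa using h2
  refine Set.eq_of_subset_of_ncard_le hsub ?_ (Set.toFinite _)
  rw [hH.2.2 _ h, Set.ncard_pair (ne10 i (i+1))]

lemma cyc_nb0_sub (hk : 3 ≤ k) (i : ZMod k) :
    H.neighborSet (i,0) ⊆ {(i+1,0),(i,1),(i-1,0),(i-1,2)} := by
  intro q hq
  have h2 := H.adj_sub hq
  rw [adj0 hk] at h2
  simpa using h2

/-- If the cycle `H` uses both the chord `v_i v_{i+1}` and the edge `v_i a_i`,
then `H` is the 4-cycle at slot `i`. -/
lemma four_case (hk : 3 ≤ k) (hH : H.IsCycleSub) (i : ZMod k) (hA : H.Adj (i,0) (i+1,0)) (hB : H.Adj (i,0) (i,1)) :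
    H = fourCycle hk i := by
  haveI : NeZero k := ⟨by omega⟩
  have deg := hH.2.2
  have m0 : ((i,0) : V3 k) ∈ H.verts := H.edge_vert hA
  have m1 : ((i,1) : V3 k) ∈ H.verts := H.edge_vert hB.symm
  have nb1 : H.neighborSet (i,1) = {(i,0),(i,2)} := cyc_nb1 hk hH i m1
  have h12 : H.Adj (i,1) (i,2) := by
    have : ((i,2) : V3 k) ∈ H.neighborSet (i,1) := by rw [nb1]; right; rfl
    exact this
  have m2 : ((i,2) : V3 k) ∈ H.verts := H.edge_vert h12.symm
  have nb2 : H.neighborSet (i,2) = {(i,1),(i+1,0)} := cyc_nb2 hk hH i m2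
  have h23 : H.Adj (i,2) (i+1,0) := by
    have : ((i+1,0) : V3 k) ∈ H.neighborSet (i,2) := by rw [nb2]; right; rfl
    exact this
  have m3 : ((i+1,0) : V3 k) ∈ H.verts := H.edge_vert h23.symm
  have nb0 : H.neighborSet (i,0) = {(i,1),(i+1,0)} := by
    refine (Set.eq_of_subset_of_ncard_le ?_ ?_ (Set.toFinite _)).symm
    · rintro q (rfl | rfl)
      · exact hB
      · exact hA
    · rw [deg _ m0, Set.ncard_pair (by simp [Prod.ext_iff])]
  have nb3 : H.neighborSet (i+1,0) = {(i,2),(i,0)} := by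
    refine (Set.eq_of_subset_of_ncard_le ?_ ?_ (Set.toFinite _)).symm
    · rintro q (rfl | rfl)
      · exact h23.symm
      · exact hA.symm
    · rw [deg _ m3, Set.ncard_pair (ne20 i i)]
  have hverts : H.verts = (fourCycle hk i).verts := by
    refine verts_eq_of_closed H hH.2.1 _ ?_ ⟨(i,0), by rw [fc_mem_verts]; tauto⟩ ?_
    · intro p hp
      rw [fc_mem_verts] at hp
      rcases hp with rfl | rfl | rfl | rfl <;> assumption
    · intro p hp q hq
      rw [fc_mem_verts] at hp
      rw [fc_mem_verts]
      rcases hp with rfl | rfl | rfl | rfl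
      · have : q ∈ H.neighborSet (i,0) := hq
        rw [nb0] at this
        rcases this with rfl | rfl <;> tauto
      · have : q ∈ H.neighborSet (i,1) := hq
        rw [nb1] at this
        rcases this with rfl | rfl <;> tauto
      · have : q ∈ H.neighborSet (i,2) := hq
        rw [nb2] at this
        rcases this with rfl | rfl <;> tauto
      · have : q ∈ H.neighborSet (i+1,0) := hq
        rw [nb3] at this
        rcases this with rfl | rfl <;> tauto
  refine subgraph_eq_of_nb hverts ?_
  intro p hp
  rw [hverts, fc_mem_verts] at hp
  rcases hp with rfl | rfl | rfl | rfl
  · rw [nb0, fc_nb0 hk]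
  · rw [nb1, fc_nb1 hk]
  · rw [nb2, fc_nb2 hk]
  · rw [nb3, fc_nb3 hk]


lemma classify (hk : 3 ≤ k) {H : (RGraph k).Subgraph} (hH : H.IsCycleSub) :
    (∃ i, H = fourCycle hk i) ∨ (∃ f, H = ringCycle hk f) := by
  haveI : NeZero k := ⟨by omega⟩
  by_cases hA : ∃ i : ZMod k, H.Adj (i,0) (i+1,0) ∧ H.Adj (i,0) (i,1)
  · obtain ⟨i, h1, h2⟩ := hA
    exact Or.inl ⟨i, four_case hk hH i h1 h2⟩
  right
  push_neg at hA
  -- basic forced adjacencies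
  have a1 : ∀ i : ZMod k, ((i,1) : V3 k) ∈ H.verts →
      H.Adj (i,1) (i,0) ∧ H.Adj (i,1) (i,2) := by
    intro i h
    have hnb := cyc_nb1 hk hH i h
    constructor
    · show ((i,0) : V3 k) ∈ H.neighborSet (i,1)
      rw [hnb]; left; rfl
    · show ((i,2) : V3 k) ∈ H.neighborSet (i,1)
      rw [hnb]; right; rfl
  have a2 : ∀ i : ZMod k, ((i,2) : V3 k) ∈ H.verts →
      H.Adj (i,2) (i,1) ∧ H.Adj (i,2) (i+1,0) := by
    intro i h
    have hnb := cyc_nb2 hk hH i h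
    constructor
    · show ((i,1) : V3 k) ∈ H.neighborSet (i,2)
      rw [hnb]; left; rfl
    · show ((i+1,0) : V3 k) ∈ H.neighborSet (i,2)
      rw [hnb]; right; rfl
  have h12 : ∀ i : ZMod k, (((i,1) : V3 k) ∈ H.verts ↔ ((i,2) : V3 k) ∈ H.verts) := by
    intro i
    constructor
    · intro h; exact H.edge_vert ((a1 i h).2).symm
    · intro h; exact H.edge_vert ((a2 i h).1).symm
  -- the two key facts about vertices (i,0)
  have notboth : ∀ i : ZMod k, ¬(H.Adj (i,0) (i+1,0) ∧ ((i,1) : V3 k) ∈ H.verts) := by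
    rintro i ⟨hd, hm⟩
    exact hA i hd ((a1 i hm).1).symm
  have right_ex : ∀ i : ZMod k, ((i,0) : V3 k) ∈ H.verts →
      H.Adj (i,0) (i+1,0) ∨ ((i,1) : V3 k) ∈ H.verts := by
    intro i hm
    by_contra hc
    push_neg at hc
    obtain ⟨hc1, hc2⟩ := hc
    have hsub : H.neighborSet (i,0) ⊆ {(i-1,0),(i-1,2)} := by
      intro q hq
      have h4 := cyc_nb0_sub hk i hq
      simp only [Set.mem_insert_iff, Set.mem_singleton_iff] at h4
      rcases h4 with rfl | rfl | rfl | rfl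
      · exact absurd hq hc1
      · exact absurd (H.edge_vert (SimpleGraph.Subgraph.Adj.symm hq)) hc2
      · left; rfl
      · right; rfl
    have heq : H.neighborSet (i,0) = {(i-1,0),(i-1,2)} := by
      refine Set.eq_of_subset_of_ncard_le hsub ?_ (Set.toFinite _)
      rw [hH.2.2 _ hm, Set.ncard_pair (ne02 (i-1) (i-1))]
    have hC : H.Adj (i,0) (i-1,0) := by
      show ((i-1,0) : V3 k) ∈ H.neighborSet (i,0); rw [heq]; left; rfl
    have hD : H.Adj (i,0) (i-1,2) := by
      show ((i-1,2) : V3 k) ∈ H.neighborSet (i,0); rw [heq]; right; rfl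
    have hm2 : ((i-1,2) : V3 k) ∈ H.verts := H.edge_vert hD.symm
    have hm1 : ((i-1,1) : V3 k) ∈ H.verts := (h12 (i-1)).mpr hm2
    have hd : H.Adj (i-1,0) ((i-1)+1,0) := by
      rw [sub_add_one]; exact hC.symm
    exact hA (i-1) hd ((a1 (i-1) hm1).1).symm
  have next : ∀ i : ZMod k, ((i,0) : V3 k) ∈ H.verts → ((i+1,0) : V3 k) ∈ H.verts := by
    intro i hm
    rcases right_ex i hm with h | h
    · exact H.edge_vert h.symm
    · exact H.edge_vert ((a2 i ((h12 i).mp h)).2).symm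
  -- all ring vertices belong to H
  have all0 : ∀ j : ZMod k, ((j,0) : V3 k) ∈ H.verts := by
    obtain ⟨⟨b,t⟩, hp⟩ := hH.1
    have base : ∃ i : ZMod k, ((i,0) : V3 k) ∈ H.verts := by
      rcases fin3 t with rfl | rfl | rfl
      · exact ⟨b, hp⟩
      · exact ⟨b, H.edge_vert ((a1 b hp).1).symm⟩
      · exact ⟨b+1, H.edge_vert ((a2 b hp).2).symm⟩
    obtain ⟨i0, hi0⟩ := base
    have hn : ∀ n : ℕ, ((i0 + (n : ZMod k), 0) : V3 k) ∈ H.verts := by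
      intro n
      induction n with
      | zero => simpa using hi0
      | succ n ih =>
          have hc : i0 + ((n+1 : ℕ) : ZMod k) = (i0 + (n : ZMod k)) + 1 := by push_cast; ring
          rw [hc]
          exact next _ ih
    intro j
    have := hn (j - i0).val
    have hval : ((((j - i0).val : ℕ)) : ZMod k) = j - i0 := ZMod.natCast_rightInverse _
    rw [hval] at this
    simpa using this
  classical
  refine ⟨fun j => decide (((j,1) : V3 k) ∈ H.verts), ?_⟩
  set f : ZMod k → Bool := fun j => decide (((j,1) : V3 k) ∈ H.verts) with hfdef
  have hf : ∀ j : ZMod k, f j = true ↔ ((j,1) : V3 k) ∈ H.verts := by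
    intro j; simp [hfdef]
  -- neighborhood of (j,0) in H
  have nb0 : ∀ j : ZMod k, H.neighborSet (j,0) =
      {(if f j then ((j,1) : V3 k) else (j+1,0)), (if f (j-1) then ((j-1,2) : V3 k) else (j-1,0))} := by
    intro j
    have hm := all0 j
    have rB : f j = true ↔ H.Adj (j,0) (j,1) := by
      rw [hf]
      constructor
      · intro h; exact ((a1 j h).1).symm
      · intro h; exact H.edge_vert h.symm
    have rA : ¬ (f j = true) ↔ H.Adj (j,0) (j+1,0) := by
      constructor
      · intro h
        rcases right_ex j hm with h' | h'
        · exact h'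
        · exact absurd ((hf j).mpr h') h
      · intro h hb
        exact notboth j ⟨h, (hf j).mp hb⟩
    have lD : f (j-1) = true ↔ H.Adj (j,0) (j-1,2) := by
      rw [hf]
      constructor
      · intro h
        have h2 : ((j-1,2) : V3 k) ∈ H.verts := (h12 (j-1)).mp h
        have := (a2 (j-1) h2).2
        rw [sub_add_one] at this
        exact this.symm
      · intro h
        exact (h12 (j-1)).mpr (H.edge_vert h.symm)
    have lC : ¬ (f (j-1) = true) ↔ H.Adj (j,0) (j-1,0) := by
      constructor
      · intro h
        by_contra hc
        -- then N ⊆ {A, B}, but exactly one of A, B is in N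
        have hsub : H.neighborSet (j,0) ⊆ {(if f j then ((j,1) : V3 k) else (j+1,0))} := by
          intro q hq
          have h4 := cyc_nb0_sub hk j hq
          simp only [Set.mem_insert_iff, Set.mem_singleton_iff] at h4
          rcases h4 with rfl | rfl | rfl | rfl
          · have : ¬ f j = true := by
              intro hb
              exact notboth j ⟨hq, (hf j).mp hb⟩
            simp [if_neg this]
          · have : f j = true := rB.mpr hq
            simp [if_pos this]
          · exact absurd hq hc
          · exact absurd ((hf (j-1)).mpr ((h12 (j-1)).mpr (H.edge_vert hq.symm))) h
        have hle := Set.ncard_le_ncard hsub (Set.toFinite _)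
        rw [hH.2.2 _ hm, Set.ncard_singleton] at hle
        omega
      · intro h hb
        have hd : H.Adj (j-1,0) ((j-1)+1,0) := by rw [sub_add_one]; exact h.symm
        have hm1 : ((j-1,1) : V3 k) ∈ H.verts := (hf (j-1)).mp hb
        exact hA (j-1) hd ((a1 (j-1) hm1).1).symm
    refine Set.Subset.antisymm ?_ ?_
    · intro q hq
      have h4 := cyc_nb0_sub hk j hq
      simp only [Set.mem_insert_iff, Set.mem_singleton_iff] at h4
      rcases h4 with rfl | rfl | rfl | rfl
      · have : ¬ f j = true := fun hb => notboth j ⟨hq, (hf j).mp hb⟩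
        simp [if_neg this]
      · have : f j = true := rB.mpr hq
        simp [if_pos this]
      · have : ¬ f (j-1) = true := by
          intro hb
          exact hA (j-1) (by rw [sub_add_one]; exact hq.symm)
            ((a1 (j-1) ((hf (j-1)).mp hb)).1).symm
        simp [if_neg this]
      · have : f (j-1) = true := (hf (j-1)).mpr ((h12 (j-1)).mpr (H.edge_vert hq.symm))
        simp [if_pos this]
    · intro q hq
      rcases hq with rfl | rfl
      · by_cases hb : f j = true
        · simp only [if_pos hb]; exact rB.mp hb
        · simp only [if_neg hb]; exact rA.mp hb
      · by_cases hb : f (j-1) = true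
        · simp only [if_pos hb]; exact lD.mp hb
        · simp only [if_neg hb]; exact lC.mp hb
  -- verts agree
  have hverts : H.verts = (ringCycle hk f).verts := by
    ext ⟨a,t⟩
    rw [rc_mem_verts]
    rcases fin3 t with rfl | rfl | rfl
    · simp [all0 a]
    · simpa using (hf a).symm
    · have : (((a,2) : V3 k) ∈ H.verts) ↔ f a = true := by
        rw [← h12 a]; exact (hf a).symm
      simpa using this
  refine subgraph_eq_of_nb hverts ?_
  rintro ⟨a,t⟩ hp
  rcases fin3 t with rfl | rfl | rfl
  · rw [nb0 a, rc_nb0 hk]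
  · have hb : f a = true := (hf a).mpr hp
    rw [cyc_nb1 hk hH a hp, rc_nb1 hk hb]
  · have hb : f a = true := (hf a).mpr ((h12 a).mpr hp)
    rw [cyc_nb2 hk hH a hp, rc_nb2 hk hb]

lemma fc_inj (hk : 3 ≤ k) : Function.Injective (fourCycle hk) := by
  intro i j h
  have hm : ((i,1) : V3 k) ∈ (fourCycle hk i).verts := by rw [fc_mem_verts]; tauto
  rw [h, fc_mem_verts] at hm
  rcases hm with h' | h' | h' | h' <;>
    simp [Prod.ext_iff] at h' <;> tauto

lemma rc_inj (hk : 3 ≤ k) : Function.Injective (ringCycle hk) := by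
  intro f g h
  funext j
  have hm : (((j,1) : V3 k) ∈ (ringCycle hk f).verts) ↔ ((j,1) : V3 k) ∈ (ringCycle hk g).verts := by
    rw [h]
  rw [rc_mem_verts, rc_mem_verts] at hm
  simp only [show ((j,1) : V3 k).2 = 1 from rfl] at hm
  rcases hfj : f j <;> rcases hgj : g j <;> simp_all

lemma oddset (hk : 3 ≤ k) (hkodd : Odd k) :
    {H : (RGraph k).Subgraph | H.IsCycleSub ∧ Odd H.verts.ncard} = Set.range (ringCycle hk) := by
  ext H
  constructor
  · rintro ⟨hc, hodd⟩
    rcases classify hk hc with ⟨i, rfl⟩ | ⟨f, rfl⟩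
    · rw [fc_verts_ncard hk] at hodd; exact absurd hodd (by decide)
    · exact ⟨f, rfl⟩
  · rintro ⟨f, rfl⟩
    exact ⟨rc_isCycle hk f, odd_rc_verts_ncard hk hkodd f⟩

lemma evenset (hk : 3 ≤ k) (hkodd : Odd k) :
    {H : (RGraph k).Subgraph | H.IsCycleSub ∧ Even H.verts.ncard} = Set.range (fourCycle hk) := by
  ext H
  constructor
  · rintro ⟨hc, heven⟩
    rcases classify hk hc with ⟨i, rfl⟩ | ⟨f, rfl⟩
    · exact ⟨i, rfl⟩
    · exact absurd heven (by
        rw [← Nat.not_odd_iff_even]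
        intro hcon
        exact hcon (odd_rc_verts_ncard hk hkodd f))
  · rintro ⟨i, rfl⟩
    exact ⟨fc_isCycle hk i, by rw [fc_verts_ncard hk]; decide⟩

lemma count_odd (hk : 3 ≤ k) (hkodd : Odd k) :
    {H : (RGraph k).Subgraph | H.IsCycleSub ∧ Odd H.verts.ncard}.ncard = 2 ^ k := by
  haveI : NeZero k := ⟨by omega⟩
  rw [oddset hk hkodd, ← Nat.card_coe_set_eq, Nat.card_range_of_injective (rc_inj hk),
    Nat.card_eq_fintype_card]
  rw [Fintype.card_fun, Fintype.card_bool, ZMod.card]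

lemma count_even (hk : 3 ≤ k) (hkodd : Odd k) :
    {H : (RGraph k).Subgraph | H.IsCycleSub ∧ Even H.verts.ncard}.ncard = k := by
  haveI : NeZero k := ⟨by omega⟩
  rw [evenset hk hkodd, ← Nat.card_coe_set_eq, Nat.card_range_of_injective (fc_inj hk),
    Nat.card_zmod]

end RK

theorem cOdd_cEven_RGraph (k : ℕ) (hk : 3 ≤ k) (hkodd : Odd k) :
    cOdd (RGraph k) = 2 ^ k ∧ cEven (RGraph k) = k := by
  exact ⟨RK.count_odd hk hkodd, RK.count_even hk hkodd⟩
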